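/- Let (G,s,t,d) be a feasible flow network (one admitting at least one flow meeting the demands, with all demands finite). Then the maximum demand over all one-way st-cuts equals the minimum size over all st-flows. -/

import Mathlib

open Finset

section Prelude

variable {V : Type*}

/-- A (directed) path in the graph with edge relation `E`: nonempty, consecutive
vertices joined by edges, and vertices pairwise distinct. -/
def IsPathOn (E : V → V → Prop) (p : List V) : Prop :=
  p ≠ [] ∧ p.Chain' E ∧ p.Nodup

/-- Reachability in the graph with edge relation `E`. -/
def Reaches (E : V → V → Prop) : V → V → Prop := Relation.ReflTransGen E

/-- The edges of a path, as the list of consecutive pairs of vertices. -/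
def pathEdges (p : List V) : List (V × V) := p.zip p.tail

/-- A path cover: a multiset of paths such that every vertex is on some path. -/
def IsPathCover (E : V → V → Prop) (P : Multiset (List V)) : Prop :=
  (∀ p ∈ P, IsPathOn E p) ∧ ∀ v : V, ∃ p ∈ P, v ∈ p

/-- The width of a graph: the minimum size of a path cover. -/
noncomputable def gwidth (E : V → V → Prop) : ℕ :=
  sInf {n | ∃ P : Multiset (List V), IsPathCover E P ∧ Multiset.card P = n}

/-- A DAG: no proper (directed) cycles. -/
def IsDAG (E : V → V → Prop) : Prop := ∀ v, ¬ Relation.TransGen E v v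

/-- The edge relation of a finite edge set. -/
def edgeRel (E : Finset (V × V)) : V → V → Prop := fun a b => (a, b) ∈ E

/-- Multiplicity of an edge with respect to a multiset of paths. -/
def mult [DecidableEq V] (P : Multiset (List V)) (e : V × V) : ℕ :=
  Multiset.countP (fun p => e ∈ pathEdges p) P

/-- A flow network: a finite edge set, source, sink, and lower bounds (demands). -/
structure FlowNet (V : Type*) where
  E : Finset (V × V)
  s : V
  t : V
  d : V × V → ℕ

/-- A flow: supported on edges, satisfying the demands, and flow conservation at
every vertex other than the source and the sink. -/
def IsFlow [Fintype V] (N : FlowNet V) (f : V × V → ℕ) : Prop :=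
  (∀ e, e ∉ N.E → f e = 0) ∧ (∀ e ∈ N.E, N.d e ≤ f e) ∧
  ∀ v : V, v ≠ N.s → v ≠ N.t → (∑ u : V, f (u, v)) = ∑ u : V, f (v, u)

/-- The size of a flow: net outflow at the source. -/
def flowSize [Fintype V] (N : FlowNet V) (f : V × V → ℕ) : ℤ :=
  (∑ u : V, (f (N.s, u) : ℤ)) - ∑ u : V, (f (u, N.s) : ℤ)

/-- An `st`-cut, given by the source side `S` (the sink side is the complement). -/
def IsCut (N : FlowNet V) (S : Set V) : Prop := N.s ∈ S ∧ N.t ∉ S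

/-- A one-way cut: a cut with no edge crossing from `T = Sᶜ` to `S`. -/
def IsOwCut (N : FlowNet V) (S : Set V) : Prop :=
  IsCut N S ∧ ∀ e ∈ N.E, e.1 ∉ S → e.2 ∉ S

open Classical in
/-- The demand of a cut: sum of demands of edges crossing from `S` to `T`. -/
noncomputable def cutDemand (N : FlowNet V) (S : Set V) : ℕ :=
  ∑ e ∈ N.E.filter (fun e => e.1 ∈ S ∧ e.2 ∉ S), N.d e

open Classical in
/-- The net flow across a cut: flow from `S` to `T` minus flow from `T` to `S`. -/
noncomputable def cutFlow (N : FlowNet V) (S : Set V) (f : V × V → ℕ) : ℤ :=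
  (∑ e ∈ N.E.filter (fun e => e.1 ∈ S ∧ e.2 ∉ S), (f e : ℤ))
    - ∑ e ∈ N.E.filter (fun e => e.1 ∉ S ∧ e.2 ∈ S), (f e : ℤ)

/-- The residual graph of a network w.r.t. a flow `f`: reverse edges of all edges,
plus the edges whose flow strictly exceeds the demand. -/
def ResidualEdge (N : FlowNet V) (f : V × V → ℕ) (u v : V) : Prop :=
  (v, u) ∈ N.E ∨ ((u, v) ∈ N.E ∧ N.d (u, v) < f (u, v))

/-- Vertices of the flow reduction: two copies of each vertex, plus source/sink. -/
abbrev FR (V : Type*) := (V ⊕ V) ⊕ Bool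

def vinF (v : V) : FR V := Sum.inl (Sum.inl v)
def voutF (v : V) : FR V := Sum.inl (Sum.inr v)
def fsrc : FR V := Sum.inr false
def fsnk : FR V := Sum.inr true

/-- Demands of the flow reduction: `1` on each edge `(vin v, vout v)`, else `0`. -/
def redD [DecidableEq V] : FR V × FR V → ℕ
  | (Sum.inl (Sum.inl a), Sum.inl (Sum.inr b)) => if a = b then 1 else 0
  | _ => 0

/-- The flow reduction of the DAG with edge set `E`. -/
def redNet [Fintype V] [DecidableEq V] (E : Finset (V × V)) : FlowNet (FR V) where
  E := (univ.image fun v : V => (fsrc, vinF v)) ∪ (univ.image fun v : V => (voutF v, fsnk))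
        ∪ (univ.image fun v : V => (vinF v, voutF v))
        ∪ (E.image fun e => (voutF e.1, vinF e.2))
  s := fsrc
  t := fsnk
  d := redD

/-- The layered cut `L^{≤ l}`: the source together with all split vertices of level `≤ l`. -/
def layerCut (ℓ : FR V → ℤ) (l : ℤ) : Set (FR V) :=
  {x | x = fsrc ∨ ((∃ v : V, x = vinF v ∨ x = voutF v) ∧ ℓ x ≤ l)}

open Classical in
/-- The layered antichain `A^l`. -/
noncomputable def layerAntichain [Fintype V] (ℓ : FR V → ℤ) (l : ℤ) : Finset V :=
  univ.filter (fun v => ℓ (vinF v) ≤ l ∧ l < ℓ (voutF v))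

end Prelude

section Aux3

open Classical

lemma exists_nodup_chain' {α : Type*} {r : α → α → Prop} {a b : α}
    (h : Relation.ReflTransGen r a b) :
    ∃ l : List α, l.Chain' r ∧ l.Nodup ∧ l.head? = some a ∧ l.getLast? = some b := by
  classical
  induction h using Relation.ReflTransGen.head_induction_on with
  | refl => exact ⟨[b], List.isChain_singleton _, by simp, rfl, rfl⟩
  | head hac hcb ih =>
    rename_i a c
    obtain ⟨l, hc, hn, hh, hg⟩ := ih
    by_cases ha : a ∈ l
    · have hi : l.idxOf a < l.length := List.idxOf_lt_length_iff.2 ha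
      have hne : l.drop (l.idxOf a) ≠ [] := by
        rw [ne_eq, List.drop_eq_nil_iff]; omega
      refine ⟨l.drop (l.idxOf a), hc.drop _, hn.sublist (List.drop_sublist _ _), ?_, ?_⟩
      · rw [List.head?_drop, List.getElem?_eq_getElem hi, List.getElem_idxOf]
      · have h2 := List.getLast?_append_of_ne_nil (l.take (l.idxOf a))
          (l₂ := l.drop (l.idxOf a)) hne
        rw [List.take_append_drop] at h2
        rw [← h2]; exact hg
    · refine ⟨a :: l, List.isChain_cons.2 ⟨?_, hc⟩, List.nodup_cons.2 ⟨ha, hn⟩, rfl, ?_⟩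
      · intro y hy; rw [hh] at hy; simp at hy; subst hy; exact hac
      · cases l with
        | nil => simp at hh
        | cons x xs => rw [List.getLast?_cons_cons]; exact hg

noncomputable def netout {V : Type*} [Fintype V] (g : V × V → ℕ) (v : V) : ℤ :=
  (∑ u : V, (g (v, u) : ℤ)) - ∑ u : V, (g (u, v) : ℤ)

lemma sum_ite_fst {V : Type*} [Fintype V] [DecidableEq V] (x y v : V) :
    (∑ u : V, if (v, u) = (x, y) then (1:ℤ) else 0) = if v = x then 1 else 0 := by
  by_cases h : v = x <;> simp [Prod.ext_iff, h]

lemma sum_ite_snd {V : Type*} [Fintype V] [DecidableEq V] (x y v : V) :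
    (∑ u : V, if (u, v) = (x, y) then (1:ℤ) else 0) = if v = y then 1 else 0 := by
  by_cases h : v = y <;> simp [Prod.ext_iff, h]

lemma netout_add {V : Type*} [Fintype V] [DecidableEq V] (g : V×V→ℕ) (x y : V) (v : V) :
    netout (fun e => if e = (x,y) then g e + 1 else g e) v
      = netout g v + (if v = x then 1 else 0) - (if v = y then 1 else 0) := by
  have key : ∀ e : V×V, ((if e = (x,y) then g e + 1 else g e : ℕ) : ℤ)
      = (g e : ℤ) + (if e = (x,y) then 1 else 0) := by
    intro e; split <;> simp
  unfold netout
  simp only [key, Finset.sum_add_distrib, sum_ite_fst, sum_ite_snd]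
  ring

lemma netout_sub {V : Type*} [Fintype V] [DecidableEq V] (g : V×V→ℕ) (x y : V)
    (h1 : 1 ≤ g (x,y)) (v : V) :
    netout (fun e => if e = (x,y) then g e - 1 else g e) v
      = netout g v - (if v = x then 1 else 0) + (if v = y then 1 else 0) := by
  have key : ∀ e : V×V, ((if e = (x,y) then g e - 1 else g e : ℕ) : ℤ)
      = (g e : ℤ) - (if e = (x,y) then 1 else 0) := by
    intro e; split
    · rename_i h; rw [h]; omega
    · simp
  unfold netout
  simp only [key, Finset.sum_sub_distrib, sum_ite_fst, sum_ite_snd]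
  ring

lemma step_mod {V : Type*} [Fintype V] [DecidableEq V] (N : FlowNet V) (fm : V×V→ℕ)
    {a b : V} (hR : ResidualEdge N fm a b)
    (g : V × V → ℕ) (hg1 : ∀ e, e ∉ N.E → g e = 0) (hg2 : ∀ e ∈ N.E, N.d e ≤ g e)
    (hgab : g (a,b) = fm (a,b)) :
    ∃ f' : V × V → ℕ, (∀ e, e ∉ N.E → f' e = 0) ∧ (∀ e ∈ N.E, N.d e ≤ f' e) ∧
      (∀ e : V × V, e ≠ (a,b) → e ≠ (b,a) → f' e = g e) ∧
      (∀ v, netout f' v = netout g v + (if v = b then 1 else 0)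
        - (if v = a then 1 else 0)) := by
  by_cases hfwd : (a,b) ∈ N.E ∧ N.d (a,b) < fm (a,b)
  · obtain ⟨hE, hd⟩ := hfwd
    have h1 : 1 ≤ g (a,b) := by omega
    refine ⟨fun e => if e = (a,b) then g e - 1 else g e, ?_, ?_, ?_, ?_⟩
    · intro e he
      dsimp only
      rw [if_neg (fun h => he (by rw [h]; exact hE))]
      exact hg1 e he
    · intro e he
      dsimp only
      by_cases h : e = (a,b)
      · subst h; rw [if_pos rfl]; omega
      · rw [if_neg h]; exact hg2 e he
    · intro e he1 _
      dsimp only; rw [if_neg he1]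
    · intro v; rw [netout_sub g a b h1 v]; ring
  · have hba : (b,a) ∈ N.E := by
      rcases hR with h | h
      · exact h
      · exact absurd h hfwd
    refine ⟨fun e => if e = (b,a) then g e + 1 else g e, ?_, ?_, ?_, ?_⟩
    · intro e he
      dsimp only
      rw [if_neg (fun h => he (by rw [h]; exact hba))]
      exact hg1 e he
    · intro e he
      dsimp only
      by_cases h : e = (b,a)
      · rw [if_pos h]; exact le_trans (hg2 e he) (Nat.le_succ _)
      · rw [if_neg h]; exact hg2 e he
    · intro e _ he2
      dsimp only; rw [if_neg he2]
    · intro v; rw [netout_add g b a v]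

lemma augment {V : Type*} [Fintype V] [DecidableEq V] (N : FlowNet V) (fm : V×V→ℕ)
    (hfm : IsFlow N fm) :
    ∀ (l : List V) (a z : V), l.getLast? = some z →
      (a :: l).Chain' (ResidualEdge N fm) → (a :: l).Nodup →
      ∃ f' : V × V → ℕ, (∀ e, e ∉ N.E → f' e = 0) ∧ (∀ e ∈ N.E, N.d e ≤ f' e) ∧
        (∀ e : V × V, e.1 ∉ a :: l ∨ e.2 ∉ a :: l → f' e = fm e) ∧
        netout f' a = netout fm a - 1 ∧
        (∀ w, w ≠ a → w ≠ z → netout f' w = netout fm w) := by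
  intro l
  induction l with
  | nil => intro a z hz; simp at hz
  | cons b rest ih =>
    intro a z hz hchain hnodup
    have hab : ResidualEdge N fm a b := (List.isChain_cons_cons.1 hchain).1
    have haS : a ∉ b :: rest := (List.nodup_cons.1 hnodup).1
    have hanb : a ≠ b := fun h => haS (h ▸ List.mem_cons_self)
    cases rest with
    | nil =>
      have hzb : z = b := by simpa using hz.symm
      subst hzb
      obtain ⟨f', c1, c2, c3, c4⟩ := step_mod N fm hab fm hfm.1 hfm.2.1 rfl
      refine ⟨f', c1, c2, ?_, ?_, ?_⟩
      · intro e he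
        apply c3 <;> rintro rfl <;> simp at he
      · have := c4 a
        rw [if_neg hanb, if_pos rfl] at this
        simpa using this
      · intro w hwa hwz
        have := c4 w
        rw [if_neg hwz, if_neg hwa] at this
        simpa using this
    | cons x rest' =>
      have hz' : (x :: rest').getLast? = some z := by
        rwa [List.getLast?_cons_cons] at hz
      obtain ⟨g, g1, g2, g3, g4, g5⟩ :=
        ih b z hz' (List.isChain_cons_cons.1 hchain).2 (List.nodup_cons.1 hnodup).2
      have hgab : g (a,b) = fm (a,b) := g3 (a,b) (Or.inl haS)
      obtain ⟨f', c1, c2, c3, c4⟩ := step_mod N fm hab g g1 g2 hgab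
      obtain ⟨hne2, hzeq⟩ := List.mem_getLast?_eq_getLast (x := z) hz'
      have hzmem : z ∈ b :: x :: rest' := by
        refine List.mem_cons_of_mem _ ?_
        rw [hzeq]; exact List.getLast_mem hne2
      have hanz : a ≠ z := fun h => haS (h ▸ hzmem)
      refine ⟨f', c1, c2, ?_, ?_, ?_⟩
      · intro e he
        have h1 : e ≠ (a,b) := by rintro rfl; simp at he
        have h2 : e ≠ (b,a) := by rintro rfl; simp at he
        rw [c3 e h1 h2]
        apply g3
        rcases he with h | h
        · exact Or.inl fun hm => h (List.mem_cons_of_mem _ hm)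
        · exact Or.inr fun hm => h (List.mem_cons_of_mem _ hm)
      · have := c4 a
        rw [if_neg hanb, if_pos rfl] at this
        rw [this, g5 a hanb hanz]
        ring
      · intro w hwa hwz
        by_cases hwb : w = b
        · subst hwb
          have := c4 w
          rw [if_pos rfl, if_neg (Ne.symm hanb)] at this
          rw [this, g4]; ring
        · have := c4 w
          rw [if_neg hwb, if_neg hwa] at this
          simpa [g5 w hwb hwz] using this

lemma cutFlow_eq_flowSize {V : Type*} [Fintype V] (N : FlowNet V) (f : V×V→ℕ)
    (hf : IsFlow N f) (S : Set V) (hs : N.s ∈ S) (ht : N.t ∉ S) :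
    cutFlow N S f = flowSize N f := by
  classical
  set A : Finset V := univ.filter (· ∈ S) with hA
  set B : Finset V := univ.filter (fun v => v ∉ S) with hB
  have hsplit : ∀ X : V → ℤ, (∑ u : V, X u) = (∑ u ∈ A, X u) + ∑ u ∈ B, X u :=
    fun X => (Finset.sum_filter_add_sum_filter_not univ _ X).symm
  have key : ∀ (P : V × V → Prop) [DecidablePred P],
      (∀ e, P e → e ∉ N.E → f e = 0) →
      (∑ e ∈ N.E.filter P, (f e : ℤ)) = ∑ e ∈ univ.filter P, (f e : ℤ) := by
    intro P hP h0
    apply Finset.sum_subset (Finset.filter_subset_filter P (subset_univ N.E))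
    intro e he hne
    simp only [Finset.mem_filter] at he hne
    rcases Decidable.em (e ∈ N.E) with h | h
    · exact absurd ⟨h, he.2⟩ hne
    · simp [h0 e he.2 h]
  have hfwd : (∑ e ∈ N.E.filter (fun e => e.1 ∈ S ∧ e.2 ∉ S), (f e : ℤ))
      = ∑ v ∈ A, ∑ u ∈ B, (f (v, u) : ℤ) := by
    rw [key (fun e => e.1 ∈ S ∧ e.2 ∉ S) (fun e _ he => hf.1 e he)]
    rw [show univ.filter (fun e : V × V => e.1 ∈ S ∧ e.2 ∉ S) = A ×ˢ B by
      ext ⟨u, v⟩; simp [hA, hB]]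
    exact Finset.sum_product _ _ _
  have hbwd : (∑ e ∈ N.E.filter (fun e => e.1 ∉ S ∧ e.2 ∈ S), (f e : ℤ))
      = ∑ v ∈ A, ∑ u ∈ B, (f (u, v) : ℤ) := by
    rw [key (fun e => e.1 ∉ S ∧ e.2 ∈ S) (fun e _ he => hf.1 e he)]
    rw [show univ.filter (fun e : V × V => e.1 ∉ S ∧ e.2 ∈ S) = B ×ˢ A by
      ext ⟨u, v⟩; simp [hA, hB]]
    rw [Finset.sum_product _ _ _]
    exact Finset.sum_comm
  have hmain : cutFlow N S f = ∑ v ∈ A, netout f v := by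
    have expand : ∀ v, netout f v
        = ((∑ u ∈ A, (f (v, u) : ℤ)) + ∑ u ∈ B, (f (v, u) : ℤ))
          - ((∑ u ∈ A, (f (u, v) : ℤ)) + ∑ u ∈ B, (f (u, v) : ℤ)) := by
      intro v; unfold netout; rw [← hsplit, ← hsplit]
    unfold cutFlow
    rw [hfwd, hbwd]
    simp only [expand, Finset.sum_sub_distrib, Finset.sum_add_distrib]
    have hc : (∑ v ∈ A, ∑ u ∈ A, (f (v, u) : ℤ)) = ∑ v ∈ A, ∑ u ∈ A, (f (u, v) : ℤ) :=
      Finset.sum_comm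
    rw [hc]
    ring
  have hsingle : (∑ v ∈ A, netout f v) = netout f N.s := by
    apply Finset.sum_eq_single_of_mem N.s (by simp [hA, hs])
    intro v hv hvs
    have hvt : v ≠ N.t := by
      simp only [hA, Finset.mem_filter] at hv
      exact fun h => ht (h ▸ hv.2)
    have := hf.2.2 v hvs hvt
    unfold netout
    have : (∑ u : V, (f (u, v) : ℤ)) = ∑ u : V, (f (v, u) : ℤ) := by
      exact_mod_cast congrArg (Nat.cast : ℕ → ℤ) this
    omega
  rw [hmain, hsingle]; rfl

end Aux3
/-- in a feasible flow network (a minimum flow is attained), the maximum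
demand over all one-way st-cuts equals the minimum size over all st-flows. -/
theorem stmt_3 {V : Type*} [Fintype V] (N : FlowNet V) (hst : N.s ≠ N.t)
    (fm : V × V → ℕ) (hfm : IsFlow N fm)
    (hmin : ∀ f, IsFlow N f → flowSize N fm ≤ flowSize N f) :
    ∃ S : Set V, IsOwCut N S ∧ (∀ S', IsOwCut N S' → cutDemand N S' ≤ cutDemand N S) ∧
      (cutDemand N S : ℤ) = flowSize N fm := by
  classical
  set S : Set V := {v | Relation.ReflTransGen (ResidualEdge N fm) N.s v} with hSdef
  have hsS : N.s ∈ S := Relation.ReflTransGen.refl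
  have htS : N.t ∉ S := by
    intro ht
    obtain ⟨l, hc, hn, hh, hg⟩ := exists_nodup_chain' (r := ResidualEdge N fm) ht
    cases l with
    | nil => simp at hh
    | cons a l' =>
      have haa : a = N.s := by simpa using hh
      subst haa
      cases l' with
      | nil => exact hst (by simpa using hg)
      | cons b rest =>
        have hz : (b :: rest).getLast? = some N.t := by
          rwa [List.getLast?_cons_cons] at hg
        obtain ⟨f', c1, c2, _, c4, c5⟩ := augment N fm hfm (b :: rest) N.s N.t hz hc hn
        have hflow : IsFlow N f' := by
          refine ⟨c1, c2, ?_⟩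
          intro v hvs hvt
          have h0 : netout fm v = 0 := by
            have hcons := hfm.2.2 v hvs hvt
            have h2 : (∑ u : V, (fm (u, v) : ℤ)) = ∑ u : V, (fm (v, u) : ℤ) := by
              exact_mod_cast congrArg (Nat.cast (R := ℤ)) hcons
            unfold netout
            omega
          have h1 : netout f' v = 0 := by rw [c5 v hvs hvt, h0]
          unfold netout at h1
          have h2 : (∑ u : V, (f' (u, v) : ℤ)) = ∑ u : V, (f' (v, u) : ℤ) := by omega
          exact_mod_cast h2
        have hsz : flowSize N f' = flowSize N fm - 1 := by
          show netout f' N.s = _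
          rw [c4]; rfl
        have := hmin f' hflow
        omega
  have howc : IsOwCut N S := by
    refine ⟨⟨hsS, htS⟩, ?_⟩
    rintro ⟨a, b⟩ he h1 h2
    exact h1 (Relation.ReflTransGen.tail h2 (Or.inl he))
  have hcross : ∀ e ∈ N.E.filter (fun e => e.1 ∈ S ∧ e.2 ∉ S), fm e = N.d e := by
    rintro ⟨a, b⟩ he
    simp only [Finset.mem_filter] at he
    obtain ⟨heE, h1, h2⟩ := he
    have hle : ¬ N.d (a, b) < fm (a, b) := by
      intro hlt
      exact h2 (h1.tail (Or.inr ⟨heE, hlt⟩))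
    have := hfm.2.1 (a, b) heE
    omega
  have hrev : ∀ S' : Set V, IsOwCut N S' →
      N.E.filter (fun e => e.1 ∉ S' ∧ e.2 ∈ S') = ∅ := by
    intro S' hS'
    apply Finset.filter_eq_empty_iff.2
    rintro e he ⟨h1, h2⟩
    exact hS'.2 e he h1 h2
  have hkey : ∀ S' : Set V, IsOwCut N S' → (cutDemand N S' : ℤ) ≤ flowSize N fm := by
    intro S' hS'
    rw [← cutFlow_eq_flowSize N fm hfm S' hS'.1.1 hS'.1.2]
    unfold cutFlow cutDemand
    rw [hrev S' hS']
    simp only [Finset.sum_empty, sub_zero]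
    push_cast
    apply Finset.sum_le_sum
    intro e he
    simp only [Finset.mem_filter] at he
    exact_mod_cast hfm.2.1 e he.1
  have heq : (cutDemand N S : ℤ) = flowSize N fm := by
    rw [← cutFlow_eq_flowSize N fm hfm S hsS htS]
    unfold cutFlow cutDemand
    rw [hrev S howc]
    simp only [Finset.sum_empty, sub_zero]
    push_cast
    apply Finset.sum_congr rfl
    intro e he
    exact_mod_cast (hcross e he).symm
  refine ⟨S, howc, ?_, heq⟩
  intro S' hS'
  have h := hkey S' hS'
  rw [← heq] at h
  exact_mod_cast h
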